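/- Let r, m ≥ 1 and let P : ℤ^r → ℂ^{m×m} be the symbol of a square system of Fourier multipliers on the torus 𝕋^r whose entries are polynomially bounded, i.e. there exist C_P > 0 and τ ∈ ℝ with |P(ξ)_{ji}| ≤ C_P(1+‖ξ‖²)^{τ/2} for all ξ ∈ ℤ^r and all 1 ≤ i, j ≤ m. Suppose there exist C > 0, k ∈ ℝ and a finite set F ⊆ ℤ^r such that |det P(ξ)| ≥ C(1+‖ξ‖²)^{k/2} for all ξ ∈ ℤ^r \ F. Then for every u : ℤ^r → ℂ^m of polynomial growth such that ξ ↦ P(ξ)u(ξ) is rapidly decreasing, u is itself rapidly decreasing (i.e. the system is globally hypoelliptic). -/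

import Mathlib

noncomputable section

open scoped BigOperators

/-- Euclidean (ℓ²) norm of a complex vector. -/
def l2norm {n : Type*} [Fintype n] (v : n → ℂ) : ℝ :=
  Real.sqrt (∑ i, ‖v i‖ ^ 2)

/-- The weight `1 + ‖ξ‖²` for a frequency `ξ ∈ ℤ^r`. -/
def wt {r : ℕ} (ξ : Fin r → ℤ) : ℝ :=
  1 + ∑ i, ((ξ i : ℝ)) ^ 2

/-- A vector-valued sequence indexed by `ℤ^r` is rapidly decreasing. -/
def RapidDecayV {r n : ℕ} (u : (Fin r → ℤ) → (Fin n → ℂ)) : Prop :=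
  ∀ M : ℝ, 0 < M → ∃ C : ℝ, 0 < C ∧ ∀ ξ, l2norm (u ξ) ≤ C * wt ξ ^ (-(M / 2))

/-- A vector-valued sequence indexed by `ℤ^r` has polynomial growth. -/
def PolyGrowthV {r n : ℕ} (u : (Fin r → ℤ) → (Fin n → ℂ)) : Prop :=
  ∃ C N : ℝ, 0 < C ∧ 0 < N ∧ ∀ ξ, l2norm (u ξ) ≤ C * wt ξ ^ (N / 2)

lemma wt_ge_one {r : ℕ} (ξ : Fin r → ℤ) : 1 ≤ wt ξ := by
  unfold wt
  have : (0:ℝ) ≤ ∑ i, ((ξ i : ℝ)) ^ 2 :=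
    Finset.sum_nonneg fun i _ => sq_nonneg _
  linarith

lemma wt_pos {r : ℕ} (ξ : Fin r → ℤ) : 0 < wt ξ :=
  lt_of_lt_of_le zero_lt_one (wt_ge_one ξ)

lemma l2norm_nonneg {n : Type*} [Fintype n] (v : n → ℂ) : 0 ≤ l2norm v :=
  Real.sqrt_nonneg _

lemma norm_le_l2norm {n : Type*} [Fintype n] (v : n → ℂ) (i : n) : ‖v i‖ ≤ l2norm v := by
  have h : ‖v i‖ ^ 2 ≤ ∑ j, ‖v j‖ ^ 2 :=
    Finset.single_le_sum (f := fun j => ‖v j‖ ^ 2) (fun j _ => sq_nonneg _) (Finset.mem_univ i)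
  calc ‖v i‖ = Real.sqrt (‖v i‖ ^ 2) := (Real.sqrt_sq (norm_nonneg _)).symm
    _ ≤ l2norm v := Real.sqrt_le_sqrt h

lemma l2norm_smul {n : Type*} [Fintype n] (c : ℂ) (v : n → ℂ) :
    l2norm (c • v) = ‖c‖ * l2norm v := by
  unfold l2norm
  have h : ∀ i, ‖(c • v) i‖ ^ 2 = ‖c‖ ^ 2 * ‖v i‖ ^ 2 := by
    intro i
    simp [Pi.smul_apply, norm_smul, mul_pow]
  simp_rw [h, ← Finset.mul_sum]
  rw [Real.sqrt_mul (sq_nonneg _), Real.sqrt_sq (norm_nonneg c)]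

lemma l2norm_mulVec_le {n : Type*} [Fintype n] (A : Matrix n n ℂ) (x : n → ℂ) :
    l2norm (A.mulVec x) ≤ (∑ j, ∑ i, ‖A j i‖) * l2norm x := by
  have hx : 0 ≤ l2norm x := l2norm_nonneg x
  have hrow : ∀ j, ‖A.mulVec x j‖ ≤ (∑ i, ‖A j i‖) * l2norm x := by
    intro j
    have : A.mulVec x j = ∑ i, A j i * x i := by
      simp [Matrix.mulVec, dotProduct]
    rw [this]
    calc ‖∑ i, A j i * x i‖ ≤ ∑ i, ‖A j i * x i‖ := norm_sum_le _ _
      _ ≤ ∑ i, ‖A j i‖ * l2norm x := by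
          refine Finset.sum_le_sum fun i _ => ?_
          rw [norm_mul]
          exact mul_le_mul_of_nonneg_left (norm_le_l2norm x i) (norm_nonneg _)
      _ = (∑ i, ‖A j i‖) * l2norm x := (Finset.sum_mul _ _ _).symm
  have h1 : l2norm (A.mulVec x) ≤ Real.sqrt (∑ j, ((∑ i, ‖A j i‖) * l2norm x) ^ 2) := by
    apply Real.sqrt_le_sqrt
    refine Finset.sum_le_sum fun j _ => ?_
    exact pow_le_pow_left₀ (norm_nonneg _) (hrow j) 2
  refine h1.trans ?_
  have h2 : ∑ j, ((∑ i, ‖A j i‖) * l2norm x) ^ 2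
      ≤ (∑ j, (∑ i, ‖A j i‖) * l2norm x) ^ 2 :=
    Finset.sum_sq_le_sq_sum_of_nonneg fun j _ =>
      mul_nonneg (Finset.sum_nonneg fun i _ => norm_nonneg _) hx
  calc Real.sqrt (∑ j, ((∑ i, ‖A j i‖) * l2norm x) ^ 2)
      ≤ Real.sqrt ((∑ j, (∑ i, ‖A j i‖) * l2norm x) ^ 2) := Real.sqrt_le_sqrt h2
    _ = ∑ j, (∑ i, ‖A j i‖) * l2norm x := Real.sqrt_sq (Finset.sum_nonneg fun j _ =>
        mul_nonneg (Finset.sum_nonneg fun i _ => norm_nonneg _) hx)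
    _ = (∑ j, ∑ i, ‖A j i‖) * l2norm x := (Finset.sum_mul _ _ _).symm

lemma norm_det_le {n : ℕ} (A : Matrix (Fin n) (Fin n) ℂ) (B : ℝ) (hB0 : 0 ≤ B)
    (hB : ∀ i j, ‖A i j‖ ≤ B) : ‖A.det‖ ≤ (Nat.factorial n : ℝ) * B ^ n := by
  rw [Matrix.det_apply']
  calc ‖∑ σ : Equiv.Perm (Fin n), ((Equiv.Perm.sign σ : ℤ) : ℂ) * ∏ i, A (σ i) i‖
      ≤ ∑ σ : Equiv.Perm (Fin n), ‖((Equiv.Perm.sign σ : ℤ) : ℂ) * ∏ i, A (σ i) i‖ :=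
        norm_sum_le _ _
    _ ≤ ∑ _σ : Equiv.Perm (Fin n), B ^ n := by
        refine Finset.sum_le_sum fun σ _ => ?_
        have hsign : ‖((Equiv.Perm.sign σ : ℤ) : ℂ)‖ = 1 := by
          rcases Int.units_eq_one_or (Equiv.Perm.sign σ) with h | h <;> simp [h]
        rw [norm_mul, hsign, one_mul, norm_prod]
        calc ∏ i, ‖A (σ i) i‖ ≤ ∏ _i : Fin n, B :=
              Finset.prod_le_prod (fun i _ => norm_nonneg _) (fun i _ => hB _ _)
          _ = B ^ n := by simp
    _ = (Nat.factorial n : ℝ) * B ^ n := by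
        rw [Finset.sum_const, Finset.card_univ, Fintype.card_perm, Fintype.card_fin,
          nsmul_eq_mul]

lemma norm_adjugate_le {n : ℕ} (A : Matrix (Fin n) (Fin n) ℂ) (B : ℝ) (hB1 : 1 ≤ B)
    (hB : ∀ i j, ‖A i j‖ ≤ B) (i j : Fin n) :
    ‖A.adjugate i j‖ ≤ (Nat.factorial n : ℝ) * B ^ n := by
  rw [Matrix.adjugate_apply]
  refine norm_det_le _ B (le_trans zero_le_one hB1) ?_
  intro a b
  rw [Matrix.updateRow_apply]
  split
  · rcases eq_or_ne b i with hb | hb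
    · rw [hb, Pi.single_eq_same]
      simp only [norm_one]
      exact hB1
    · simp [Pi.single_apply, hb, le_trans zero_le_one hB1]
  · exact hB a b

theorem square_system_GH_det (r m : ℕ) (hr : 1 ≤ r) (hm : 1 ≤ m)
    (P : (Fin r → ℤ) → Matrix (Fin m) (Fin m) ℂ)
    (CP τ : ℝ) (hCP : 0 < CP)
    (hentries : ∀ ξ, ∀ j i : Fin m, ‖P ξ j i‖ ≤ CP * wt ξ ^ (τ / 2))
    (C k : ℝ) (hC : 0 < C) (F : Set (Fin r → ℤ)) (hF : F.Finite)
    (hdet : ∀ ξ, ξ ∉ F → ‖(P ξ).det‖ ≥ C * wt ξ ^ (k / 2)) :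
    ∀ u : (Fin r → ℤ) → (Fin m → ℂ), PolyGrowthV u →
      RapidDecayV (fun ξ => (P ξ).mulVec (u ξ)) → RapidDecayV u := by
  intro u _hpoly hv
  intro M hM
  set τ' : ℝ := max τ 0 with hτ'
  have hτ'0 : 0 ≤ τ' := le_max_right _ _
  -- modified entry bound with nonnegative exponent and constant ≥ 1
  have hent' : ∀ ξ, ∀ j i : Fin m, ‖P ξ j i‖ ≤ (CP + 1) * wt ξ ^ (τ' / 2) := by
    intro ξ j i
    have h1 : wt ξ ^ (τ / 2) ≤ wt ξ ^ (τ' / 2) :=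
      Real.rpow_le_rpow_of_exponent_le (wt_ge_one ξ)
        (by have := le_max_left τ (0:ℝ); linarith)
    have h2 : 0 ≤ wt ξ ^ (τ / 2) := Real.rpow_nonneg (le_of_lt (wt_pos ξ)) _
    calc ‖P ξ j i‖ ≤ CP * wt ξ ^ (τ / 2) := hentries ξ j i
      _ ≤ (CP + 1) * wt ξ ^ (τ' / 2) := by nlinarith
  have hBξ1 : ∀ ξ : Fin r → ℤ, (1:ℝ) ≤ (CP + 1) * wt ξ ^ (τ' / 2) := by
    intro ξ
    have h1 : (1:ℝ) ≤ wt ξ ^ (τ' / 2) :=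
      Real.one_le_rpow (wt_ge_one ξ) (by linarith)
    nlinarith
  set E : ℝ := (Nat.factorial m : ℝ) * (CP + 1) ^ m with hE
  have hE0 : 0 < E := by positivity
  -- adjugate entry bound
  have hadj : ∀ ξ, ∀ i j : Fin m,
      ‖(P ξ).adjugate i j‖ ≤ E * wt ξ ^ ((m : ℝ) * τ' / 2) := by
    intro ξ i j
    have h := norm_adjugate_le (P ξ) ((CP + 1) * wt ξ ^ (τ' / 2)) (hBξ1 ξ)
      (fun a b => hent' ξ a b) i j
    refine h.trans (le_of_eq ?_)
    rw [mul_pow, ← Real.rpow_natCast (wt ξ ^ (τ' / 2)) m,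
      ← Real.rpow_mul (le_of_lt (wt_pos ξ))]
    rw [hE]
    ring_nf
  set M' : ℝ := max (M + (m : ℝ) * τ' - k) M with hM'
  have hM'pos : 0 < M' := lt_of_lt_of_le hM (le_max_right _ _)
  obtain ⟨C2, hC2, hv2⟩ := hv M' hM'pos
  set K : ℝ := (m : ℝ) ^ 2 * E * C2 / C with hK
  have hK0 : 0 < K := by
    have hm0 : (0:ℝ) < (m:ℝ) := by exact_mod_cast Nat.lt_of_lt_of_le Nat.zero_lt_one hm
    positivity
  -- off-F estimate
  have hoff : ∀ ξ, ξ ∉ F → l2norm (u ξ) ≤ K * wt ξ ^ (-(M / 2)) := by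
    intro ξ hξ
    have hwt := wt_pos ξ
    have hd : (0:ℝ) < C * wt ξ ^ (k / 2) := by positivity
    have hdet' := hdet ξ hξ
    -- Cramer identity
    have key : (Matrix.adjugate (P ξ)).mulVec ((P ξ).mulVec (u ξ)) = (P ξ).det • u ξ := by
      rw [Matrix.mulVec_mulVec, Matrix.adjugate_mul, Matrix.smul_mulVec,
        Matrix.one_mulVec]
    have h1 : ‖(P ξ).det‖ * l2norm (u ξ)
        = l2norm ((Matrix.adjugate (P ξ)).mulVec ((P ξ).mulVec (u ξ))) := by
      rw [key, l2norm_smul]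
    have h2 : l2norm ((Matrix.adjugate (P ξ)).mulVec ((P ξ).mulVec (u ξ)))
        ≤ ((m : ℝ) ^ 2 * (E * wt ξ ^ ((m : ℝ) * τ' / 2))) * (C2 * wt ξ ^ (-(M' / 2))) := by
      have hS : (∑ j : Fin m, ∑ i : Fin m, ‖(Matrix.adjugate (P ξ)) j i‖)
          ≤ (m : ℝ) ^ 2 * (E * wt ξ ^ ((m : ℝ) * τ' / 2)) := by
        calc (∑ j : Fin m, ∑ i : Fin m, ‖(Matrix.adjugate (P ξ)) j i‖)
            ≤ ∑ _j : Fin m, ∑ _i : Fin m, E * wt ξ ^ ((m : ℝ) * τ' / 2) := by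
              refine Finset.sum_le_sum fun j _ => Finset.sum_le_sum fun i _ => hadj ξ j i
          _ = (m : ℝ) ^ 2 * (E * wt ξ ^ ((m : ℝ) * τ' / 2)) := by
              simp [Finset.sum_const, Finset.card_univ]
              ring
      have hEw : 0 ≤ (m : ℝ) ^ 2 * (E * wt ξ ^ ((m : ℝ) * τ' / 2)) := by positivity
      calc l2norm ((Matrix.adjugate (P ξ)).mulVec ((P ξ).mulVec (u ξ)))
          ≤ (∑ j : Fin m, ∑ i : Fin m, ‖(Matrix.adjugate (P ξ)) j i‖)
              * l2norm ((P ξ).mulVec (u ξ)) := l2norm_mulVec_le _ _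
        _ ≤ ((m : ℝ) ^ 2 * (E * wt ξ ^ ((m : ℝ) * τ' / 2)))
              * (C2 * wt ξ ^ (-(M' / 2))) := by
            refine mul_le_mul hS (hv2 ξ) (l2norm_nonneg _) hEw
    have h3 : (C * wt ξ ^ (k / 2)) * l2norm (u ξ)
        ≤ ((m : ℝ) ^ 2 * (E * wt ξ ^ ((m : ℝ) * τ' / 2))) * (C2 * wt ξ ^ (-(M' / 2))) := by
      calc (C * wt ξ ^ (k / 2)) * l2norm (u ξ) ≤ ‖(P ξ).det‖ * l2norm (u ξ) :=
            mul_le_mul_of_nonneg_right hdet' (l2norm_nonneg _)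
        _ = _ := h1
        _ ≤ _ := h2
    have h4 : l2norm (u ξ)
        ≤ ((m : ℝ) ^ 2 * (E * wt ξ ^ ((m : ℝ) * τ' / 2))) * (C2 * wt ξ ^ (-(M' / 2)))
            / (C * wt ξ ^ (k / 2)) := by
      rw [le_div_iff₀ hd]
      linarith [h3]
    refine h4.trans ?_
    have hre : ((m : ℝ) ^ 2 * (E * wt ξ ^ ((m : ℝ) * τ' / 2))) * (C2 * wt ξ ^ (-(M' / 2)))
        / (C * wt ξ ^ (k / 2))
        = K * wt ξ ^ ((m : ℝ) * τ' / 2 + (-(M' / 2)) - k / 2) := by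
      rw [Real.rpow_sub hwt, Real.rpow_add hwt, hK]
      field_simp
    rw [hre]
    have hexp : (m : ℝ) * τ' / 2 + (-(M' / 2)) - k / 2 ≤ -(M / 2) := by
      have : M + (m : ℝ) * τ' - k ≤ M' := le_max_left _ _
      linarith
    exact mul_le_mul_of_nonneg_left
      (Real.rpow_le_rpow_of_exponent_le (wt_ge_one ξ) hexp) (le_of_lt hK0)
  -- constant over the finite exceptional set
  set B : ℝ := ∑ ξ ∈ hF.toFinset, l2norm (u ξ) * wt ξ ^ (M / 2) with hB
  have hB0 : 0 ≤ B :=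
    Finset.sum_nonneg fun ξ _ =>
      mul_nonneg (l2norm_nonneg _) (Real.rpow_nonneg (le_of_lt (wt_pos ξ)) _)
  refine ⟨K + B + 1, by linarith, ?_⟩
  intro ξ
  have hwneg : 0 ≤ wt ξ ^ (-(M / 2)) := Real.rpow_nonneg (le_of_lt (wt_pos ξ)) _
  by_cases hξ : ξ ∈ F
  · have hmem : ξ ∈ hF.toFinset := hF.mem_toFinset.mpr hξ
    have hle : l2norm (u ξ) * wt ξ ^ (M / 2) ≤ B :=
      Finset.single_le_sum (f := fun ξ => l2norm (u ξ) * wt ξ ^ (M / 2))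
        (fun ζ _ => mul_nonneg (l2norm_nonneg _) (Real.rpow_nonneg (le_of_lt (wt_pos ζ)) _))
        hmem
    have hid : l2norm (u ξ) = (l2norm (u ξ) * wt ξ ^ (M / 2)) * wt ξ ^ (-(M / 2)) := by
      rw [mul_assoc, ← Real.rpow_add (wt_pos ξ)]
      simp
    rw [hid]
    have : (l2norm (u ξ) * wt ξ ^ (M / 2)) * wt ξ ^ (-(M / 2)) ≤ B * wt ξ ^ (-(M / 2)) :=
      mul_le_mul_of_nonneg_right hle hwneg
    refine this.trans ?_
    exact mul_le_mul_of_nonneg_right (by linarith) hwneg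
  · refine (hoff ξ hξ).trans ?_
    exact mul_le_mul_of_nonneg_right (by linarith) hwneg
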